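/- Let f^0, …, f^{λ−1} : Fin 26 → ℕ with entrywise sum f sorted nondecreasing, and g^l the nondecreasing rearrangement of f^l. Define the twist of a vector u as the integer (∑_{i=13}^{25} u(i)) − (∑_{i=0}^{12} u(i)). Then twist(f) ≤ ∑_{l=0}^{λ−1} twist(g^l). -/
import Mathlib

open Finset

lemma le_apply_fin {n m : ℕ} {φ : Fin n → Fin m} (h : StrictMono φ) (i : Fin n) :
    (i : ℕ) ≤ (φ i : ℕ) := by
  induction' hk : (i : ℕ) with k ih generalizing i
  · exact Nat.zero_le _
  · have hj : k < n := by omega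
    have h1 := ih ⟨k, hj⟩ rfl
    have h2 : (⟨k, hj⟩ : Fin n) < i := by simp [Fin.lt_def, hk]
    have h3 : (φ ⟨k, hj⟩ : ℕ) < (φ i : ℕ) := h h2
    omega

lemma sum_first13_le (g : Fin 26 → ℕ) (hg : Monotone g) (T : Finset (Fin 26))
    (hT : T.card = 13) :
    ∑ i ∈ univ.filter (fun i : Fin 26 => (i : ℕ) < 13), g i ≤ ∑ j ∈ T, g j := by
  have h1 : ∑ j ∈ T, g j = ∑ i : Fin 13, g (T.orderIsoOfFin hT i) := by
    rw [← Finset.sum_attach T (fun j => g j)]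
    exact (Fintype.sum_equiv (T.orderIsoOfFin hT).toEquiv _ _ (fun i => rfl)).symm
  have h2 : ∑ i ∈ univ.filter (fun i : Fin 26 => (i : ℕ) < 13), g i
      = ∑ i : Fin 13, g (Fin.castLE (by norm_num) i) := by
    refine Finset.sum_nbij' (i := fun a => (⟨(a : ℕ) % 13, Nat.mod_lt _ (by norm_num)⟩ : Fin 13))
      (j := fun a => Fin.castLE (by norm_num) a) ?_ ?_ ?_ ?_ ?_ <;>
      intro a ha <;> simp_all [Fin.ext_iff, Nat.mod_eq_of_lt]
  rw [h1, h2]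
  apply Finset.sum_le_sum
  intro i _
  apply hg
  have hsm : StrictMono (fun i : Fin 13 => ((T.orderIsoOfFin hT i : Fin 26))) := by
    intro a b hab
    exact (T.orderIsoOfFin hT).strictMono hab
  have := le_apply_fin hsm i
  exact Fin.le_def.mpr (by simpa using this)

lemma part_twist_le (u g : Fin 26 → ℕ) (σ : Equiv.Perm (Fin 26))
    (hp : g = u ∘ σ) (hg : Monotone g) :
    (∑ i ∈ univ.filter (fun i : Fin 26 => 13 ≤ (i : ℕ)), (u i : ℤ)) -
      (∑ i ∈ univ.filter (fun i : Fin 26 => (i : ℕ) < 13), (u i : ℤ)) ≤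
    (∑ i ∈ univ.filter (fun i : Fin 26 => 13 ≤ (i : ℕ)), (g i : ℤ)) -
      (∑ i ∈ univ.filter (fun i : Fin 26 => (i : ℕ) < 13), (g i : ℤ)) := by
  set B : Finset (Fin 26) := univ.filter (fun i : Fin 26 => (i : ℕ) < 13) with hB
  have hfilter : univ.filter (fun i : Fin 26 => ¬ 13 ≤ (i : ℕ)) = B := by
    apply Finset.filter_congr; intro i _; omega
  have htotu : ∑ i ∈ univ.filter (fun i : Fin 26 => 13 ≤ (i : ℕ)), u i + ∑ i ∈ B, u i
      = ∑ i, u i := by rw [← hfilter]; exact Finset.sum_filter_add_sum_filter_not _ _ _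
  have htotg : ∑ i ∈ univ.filter (fun i : Fin 26 => 13 ≤ (i : ℕ)), g i + ∑ i ∈ B, g i
      = ∑ i, g i := by rw [← hfilter]; exact Finset.sum_filter_add_sum_filter_not _ _ _
  have htot : ∑ i, g i = ∑ i, u i := by
    rw [hp]; exact Equiv.sum_comp σ u
  have hbot : ∑ i ∈ B, g i ≤ ∑ i ∈ B, u i := by
    have h1 : ∑ i ∈ B, u i = ∑ j ∈ B.image σ.symm, g j := by
      rw [Finset.sum_image (fun a _ b _ h => σ.symm.injective h)]
      apply Finset.sum_congr rfl
      intro i _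
      simp [hp]
    have h2 : (B.image σ.symm).card = 13 := by
      rw [Finset.card_image_of_injective _ σ.symm.injective]
      decide
    rw [h1]
    exact sum_first13_le g hg _ h2
  have c1 : (∑ i ∈ B, (g i : ℤ)) ≤ ∑ i ∈ B, (u i : ℤ) := by exact_mod_cast hbot
  have hn := htotu.trans (htot.symm.trans htotg.symm)
  have c2 : (∑ i ∈ univ.filter (fun i : Fin 26 => 13 ≤ (i : ℕ)), (u i : ℤ)) + ∑ i ∈ B, (u i : ℤ)
      = (∑ i ∈ univ.filter (fun i : Fin 26 => 13 ≤ (i : ℕ)), (g i : ℤ)) + ∑ i ∈ B, (g i : ℤ) := by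
    exact_mod_cast hn
  linarith




/-- With `f` the sorted entrywise sum of the `fs l` and each `gs l` the sorted
rearrangement of `fs l`, the (integer) twist of `f` is at most the sum of the
twists of the `gs l`. -/
theorem twist_le_sum_of_parts (lam : ℕ) (f : Fin 26 → ℕ)
    (fs gs : Fin lam → Fin 26 → ℕ)
    (hsum : ∀ i, f i = ∑ l, fs l i) (hfmono : Monotone f)
    (σ : Fin lam → Equiv.Perm (Fin 26))
    (hperm : ∀ l, gs l = fs l ∘ σ l) (hgmono : ∀ l, Monotone (gs l)) :
    (∑ i ∈ Finset.univ.filter (fun i : Fin 26 => 13 ≤ (i : ℕ)), (f i : ℤ)) -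
        (∑ i ∈ Finset.univ.filter (fun i : Fin 26 => (i : ℕ) < 13), (f i : ℤ)) ≤
      ∑ l, ((∑ i ∈ Finset.univ.filter (fun i : Fin 26 => 13 ≤ (i : ℕ)), (gs l i : ℤ)) -
        ∑ i ∈ Finset.univ.filter (fun i : Fin 26 => (i : ℕ) < 13), (gs l i : ℤ)) := by
  have hL : (∑ i ∈ Finset.univ.filter (fun i : Fin 26 => 13 ≤ (i : ℕ)), (f i : ℤ)) -
      (∑ i ∈ Finset.univ.filter (fun i : Fin 26 => (i : ℕ) < 13), (f i : ℤ))
      = ∑ l, ((∑ i ∈ Finset.univ.filter (fun i : Fin 26 => 13 ≤ (i : ℕ)), (fs l i : ℤ)) -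
        ∑ i ∈ Finset.univ.filter (fun i : Fin 26 => (i : ℕ) < 13), (fs l i : ℤ)) := by
    simp only [hsum]
    push_cast
    rw [Finset.sum_sub_distrib]
    congr 1 <;> exact Finset.sum_comm
  rw [hL]
  exact Finset.sum_le_sum fun l _ => part_twist_le (fs l) (gs l) (σ l) (hperm l) (hgmono l)
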